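/- Let α be a unital partial action of a finite abelian group G on a commutative ring S such that S is a partial α-Galois extension of R := S^α, regard S as an R-algebra via the inclusion R ⊆ S, and define φ : S ⊗_R S → Ŝ by φ(x ⊗ y) := (x·α_g(y·1_{g⁻¹}))_{g∈G}, where Ŝ := {a : G → S : a_g = a_g·1_g for all g ∈ G}. Then φ is an isomorphism of R-algebras, φ((S·1_h) ⊗ (S·1_{l⁻¹})) = Ŝ·1̂_{(h,l)} for all h, l ∈ G, and φ(α_h(x·1_{h⁻¹}) ⊗ α_{l⁻¹}(y·1_l)) = γ_{(h,l)}(φ(x·1_{h⁻¹} ⊗ y·1_l)) for all x, y ∈ S and h, l ∈ G; that is, φ is a partial (G×G)-isomorphism between the tensor-product partial action on S ⊗_R S and the partial action γ on Ŝ. (Proposition 6.1(ii).) -/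
import Mathlib


open TensorProduct

set_option linter.unusedSectionVars false

section Aux

variable {G : Type*} [CommGroup G] [Fintype G]
variable {S R : Type*} [CommRing S] [CommRing R] [Algebra R S]

theorem aux_zero {E : G → S} {α : G → S → S}
    (hadd : ∀ (g : G) (x y : S), x * E g⁻¹ = x → y * E g⁻¹ = y →
      α g (x + y) = α g x + α g y) (g : G) : α g 0 = 0 := by
  have h := hadd g 0 0 (by ring) (by ring)
  rw [add_zero] at h
  have h2 : α g 0 + α g 0 = α g 0 + 0 := by rw [add_zero]; exact h.symm
  exact add_left_cancel h2

theorem aux_mem {E : G → S} {α : G → S → S}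
    (hbij : ∀ g : G, Set.BijOn (α g) {x : S | x * E g⁻¹ = x} {x : S | x * E g = x})
    (g : G) (u : S) (hu : u * E g⁻¹ = u) : α g u * E g = α g u :=
  (hbij g).mapsTo hu

theorem aux_sum {E : G → S} {α : G → S → S}
    (hadd : ∀ (g : G) (x y : S), x * E g⁻¹ = x → y * E g⁻¹ = y →
      α g (x + y) = α g x + α g y)
    (g : G) {ι : Type*} (t : Finset ι) (f : ι → S)
    (hf : ∀ i ∈ t, f i * E g⁻¹ = f i) :
    α g (∑ i ∈ t, f i) = ∑ i ∈ t, α g (f i) := by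
  classical
  induction t using Finset.induction_on with
  | empty => simpa using aux_zero hadd g
  | @insert a s ha ih =>
    rw [Finset.sum_insert ha, Finset.sum_insert ha,
      hadd g _ _ (hf a (Finset.mem_insert_self a s))
        (by rw [Finset.sum_mul]
            exact Finset.sum_congr rfl fun i hi => hf i (Finset.mem_insert_of_mem hi)),
      ih fun i hi => hf i (Finset.mem_insert_of_mem hi)]

theorem aux_L4 {E : G → S} {α : G → S → S}
    (hE1 : E 1 = 1) (hEidem : ∀ g : G, E g * E g = E g)
    (hmul : ∀ (g : G) (x y : S), x * E g⁻¹ = x → y * E g⁻¹ = y →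
      α g (x * y) = α g x * α g y)
    (hid : ∀ x : S, α 1 x = x)
    {n : ℕ} {x y : ℕ → S}
    (hGal : ∀ g : G,
      (g = 1 → ∑ i ∈ Finset.range n, x i * α g (y i * E g⁻¹) = 1) ∧
      (g ≠ 1 → ∑ i ∈ Finset.range n, x i * α g (y i * E g⁻¹) = 0))
    [DecidableEq G] (k : G) (c : S) :
    ∑ i ∈ Finset.range n, x i * α k (y i * c * E k⁻¹) = if k = 1 then c else 0 := by
  have step : ∀ i, α k (y i * c * E k⁻¹) = α k (y i * E k⁻¹) * α k (c * E k⁻¹) := by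
    intro i
    rw [show y i * c * E k⁻¹ = (y i * E k⁻¹) * (c * E k⁻¹) from by
      linear_combination (-(y i * c)) * hEidem k⁻¹]
    exact hmul k _ _ (by linear_combination (y i) * hEidem k⁻¹)
      (by linear_combination c * hEidem k⁻¹)
  have hfac : ∑ i ∈ Finset.range n, x i * α k (y i * c * E k⁻¹)
      = (∑ i ∈ Finset.range n, x i * α k (y i * E k⁻¹)) * α k (c * E k⁻¹) := by
    rw [Finset.sum_mul]
    exact Finset.sum_congr rfl fun i _ => by rw [step i]; ring
  rw [hfac]
  by_cases hk : k = 1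
  · subst hk
    rw [(hGal 1).1 rfl, one_mul, inv_one, hE1, mul_one, hid, if_pos rfl]
  · rw [(hGal k).2 hk, zero_mul, if_neg hk]

theorem aux_trace {E : G → S} {α : G → S → S}
    (hEidem : ∀ g : G, E g * E g = E g)
    (hadd : ∀ (g : G) (x y : S), x * E g⁻¹ = x → y * E g⁻¹ = y →
      α g (x + y) = α g x + α g y)
    (hcomp2 : ∀ (g k : G) (x : S),
      α g (α k (x * E k⁻¹) * E g⁻¹) = α (g * k) (x * E (g * k)⁻¹) * E g)
    (hRrange : Set.range (algebraMap R S) = {s : S | ∀ g : G, α g (s * E g⁻¹) = s * E g})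
    (s : S) : (∑ g : G, α g (s * E g⁻¹)) ∈ Set.range (algebraMap R S) := by
  rw [hRrange]
  intro k
  rw [Finset.sum_mul,
    aux_sum hadd k Finset.univ _ (fun g _ => by
      linear_combination (α g (s * E g⁻¹)) * hEidem k⁻¹),
    Finset.sum_mul]
  calc ∑ g : G, α k (α g (s * E g⁻¹) * E k⁻¹)
      = ∑ g : G, α (k * g) (s * E (k * g)⁻¹) * E k :=
        Finset.sum_congr rfl fun g _ => hcomp2 k g s
    _ = ∑ g : G, α g (s * E g⁻¹) * E k :=
        Fintype.sum_equiv (Equiv.mulLeft k) _ _ (fun g => rfl)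

noncomputable def psiFun (E : G → S) (α : G → S → S) (n : ℕ) (x y : ℕ → S) (a : G → S) :
    S ⊗[R] S :=
  ∑ h : G, ∑ i ∈ Finset.range n, x i ⊗ₜ[R] α h⁻¹ (y i * a h * E h)

theorem aux_phi_psi {E : G → S} {α : G → S → S}
    (hE1 : E 1 = 1) (hEidem : ∀ g : G, E g * E g = E g)
    (hmul : ∀ (g : G) (x y : S), x * E g⁻¹ = x → y * E g⁻¹ = y →
      α g (x * y) = α g x * α g y)
    (hid : ∀ x : S, α 1 x = x)
    (hcomp2 : ∀ (g k : G) (x : S),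
      α g (α k (x * E k⁻¹) * E g⁻¹) = α (g * k) (x * E (g * k)⁻¹) * E g)
    {n : ℕ} {x y : ℕ → S}
    (hGal : ∀ g : G,
      (g = 1 → ∑ i ∈ Finset.range n, x i * α g (y i * E g⁻¹) = 1) ∧
      (g ≠ 1 → ∑ i ∈ Finset.range n, x i * α g (y i * E g⁻¹) = 0))
    (φ : S ⊗[R] S →ₐ[R] (G → S))
    (hφ : ∀ a b : S, φ (a ⊗ₜ[R] b) = fun g : G => a * α g (b * E g⁻¹))
    (a : G → S) (ha : ∀ g : G, a g * E g = a g) :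
    φ (psiFun E α n x y a) = a := by
  classical
  funext g
  rw [psiFun, map_sum, Finset.sum_apply]
  have step1 : ∀ h : G, (φ (∑ i ∈ Finset.range n, x i ⊗ₜ[R] α h⁻¹ (y i * a h * E h))) g
      = (if g * h⁻¹ = 1 then a h else 0) * E g := by
    intro h
    rw [map_sum, Finset.sum_apply]
    have e1 : ∀ i, (φ (x i ⊗ₜ[R] α h⁻¹ (y i * a h * E h))) g
        = x i * (α (g * h⁻¹) (y i * a h * E (g * h⁻¹)⁻¹) * E g) := by
      intro i
      rw [hφ]
      have h2 := hcomp2 g h⁻¹ (y i * a h)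
      rw [inv_inv] at h2
      simp only []
      rw [h2]
    rw [Finset.sum_congr rfl fun i _ => e1 i,
      show (∑ i ∈ Finset.range n, x i * (α (g * h⁻¹) (y i * a h * E (g * h⁻¹)⁻¹) * E g))
        = (∑ i ∈ Finset.range n, x i * α (g * h⁻¹) (y i * a h * E (g * h⁻¹)⁻¹)) * E g from by
        rw [Finset.sum_mul]; exact Finset.sum_congr rfl fun i _ => by ring,
      aux_L4 hE1 hEidem hmul hid hGal (g * h⁻¹) (a h)]
  rw [Finset.sum_congr rfl fun h _ => step1 h]
  have : ∀ h : G, (if g * h⁻¹ = 1 then a h else 0) * E g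
      = if h = g then a h * E g else 0 := by
    intro h
    by_cases hh : h = g
    · subst hh; rw [if_pos (by group), if_pos rfl]
    · rw [if_neg (fun hc => hh (by
        have := mul_inv_eq_one.mp hc; exact this.symm)), if_neg hh, zero_mul]
  rw [Finset.sum_congr rfl fun h _ => this h, Finset.sum_ite_eq' Finset.univ g
    (fun h => a h * E g), if_pos (Finset.mem_univ g), ha g]

theorem aux_psi_phi {E : G → S} {α : G → S → S}
    (hE1 : E 1 = 1) (hEidem : ∀ g : G, E g * E g = E g)
    (hbij : ∀ g : G, Set.BijOn (α g) {x : S | x * E g⁻¹ = x} {x : S | x * E g = x})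
    (hadd : ∀ (g : G) (x y : S), x * E g⁻¹ = x → y * E g⁻¹ = y →
      α g (x + y) = α g x + α g y)
    (hmul : ∀ (g : G) (x y : S), x * E g⁻¹ = x → y * E g⁻¹ = y →
      α g (x * y) = α g x * α g y)
    (hid : ∀ x : S, α 1 x = x)
    (hcomp2 : ∀ (g k : G) (x : S),
      α g (α k (x * E k⁻¹) * E g⁻¹) = α (g * k) (x * E (g * k)⁻¹) * E g)
    (hRrange : Set.range (algebraMap R S) = {s : S | ∀ g : G, α g (s * E g⁻¹) = s * E g})
    {n : ℕ} {x y : ℕ → S}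
    (hGal : ∀ g : G,
      (g = 1 → ∑ i ∈ Finset.range n, x i * α g (y i * E g⁻¹) = 1) ∧
      (g ≠ 1 → ∑ i ∈ Finset.range n, x i * α g (y i * E g⁻¹) = 0))
    (a b : S) :
    psiFun (R := R) E α n x y (fun g : G => a * α g (b * E g⁻¹)) = a ⊗ₜ[R] b := by
  classical
  rw [psiFun]
  -- Step A: simplify each summand
  have stepA : ∀ (h : G) (i : ℕ),
      α h⁻¹ (y i * ((fun g : G => a * α g (b * E g⁻¹)) h) * E h)
        = α h⁻¹ (y i * a * E h) * b := by
    intro h i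
    simp only []
    have hB : α h (b * E h⁻¹) * E h = α h (b * E h⁻¹) :=
      aux_mem hbij h _ (by linear_combination b * hEidem h⁻¹)
    have harg : y i * (a * α h (b * E h⁻¹)) * E h
        = (y i * a * E h) * α h (b * E h⁻¹) := by ring
    rw [harg, hmul h⁻¹ _ _ (by rw [inv_inv]; linear_combination (y i * a) * hEidem h)
      (by rw [inv_inv]; exact hB)]
    have hBinv : α h⁻¹ (α h (b * E h⁻¹)) = b * E h⁻¹ := by
      have h2 := hcomp2 h⁻¹ h b
      rw [inv_inv, hB, inv_mul_cancel, inv_one, hE1, mul_one, hid] at h2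
      exact h2
    rw [hBinv]
    have hC : α h⁻¹ (y i * a * E h) * E h⁻¹ = α h⁻¹ (y i * a * E h) :=
      aux_mem hbij h⁻¹ _ (by rw [inv_inv]; linear_combination (y i * a) * hEidem h)
    linear_combination b * hC
  rw [Finset.sum_congr rfl fun h _ => Finset.sum_congr rfl fun i _ => by
    rw [stepA h i], Finset.sum_comm]
  -- collect the inner sums
  have stepB : ∀ i : ℕ,
      (∑ h : G, x i ⊗ₜ[R] (α h⁻¹ (y i * a * E h) * b))
        = ((∑ h : G, α h⁻¹ (y i * a * E h)) * x i) ⊗ₜ[R] b := by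
    intro i
    rw [← TensorProduct.tmul_sum, ← Finset.sum_mul]
    obtain ⟨r, hr⟩ : (∑ h : G, α h⁻¹ (y i * a * E h)) ∈ Set.range (algebraMap R S) := by
      have := aux_trace hEidem hadd hcomp2 hRrange (y i * a)
      rwa [show (∑ g : G, α g (y i * a * E g⁻¹)) = ∑ h : G, α h⁻¹ (y i * a * E h) from
        Fintype.sum_equiv (Equiv.inv G) _ _ (fun g => by rw [Equiv.inv_apply, inv_inv])] at this
    calc x i ⊗ₜ[R] ((∑ h : G, α h⁻¹ (y i * a * E h)) * b)
        = x i ⊗ₜ[R] (r • b) := by rw [← hr, Algebra.smul_def]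
      _ = r • (x i ⊗ₜ[R] b) := by rw [TensorProduct.tmul_smul]
      _ = (r • x i) ⊗ₜ[R] b := by rw [TensorProduct.smul_tmul']
      _ = ((∑ h : G, α h⁻¹ (y i * a * E h)) * x i) ⊗ₜ[R] b := by
          rw [Algebra.smul_def, hr]
  rw [Finset.sum_congr rfl fun i _ => stepB i, ← TensorProduct.sum_tmul]
  congr 1
  calc ∑ i ∈ Finset.range n, (∑ h : G, α h⁻¹ (y i * a * E h)) * x i
      = ∑ h : G, ∑ i ∈ Finset.range n, x i * α h⁻¹ (y i * a * E h) := by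
        rw [show (∑ i ∈ Finset.range n, (∑ h : G, α h⁻¹ (y i * a * E h)) * x i)
            = ∑ i ∈ Finset.range n, ∑ h : G, x i * α h⁻¹ (y i * a * E h) from
          Finset.sum_congr rfl fun i _ => by
            rw [Finset.sum_mul]
            exact Finset.sum_congr rfl fun h _ => by ring]
        exact Finset.sum_comm
    _ = ∑ k : G, ∑ i ∈ Finset.range n, x i * α k (y i * a * E k⁻¹) :=
        Fintype.sum_equiv (Equiv.inv G) _ _ (fun h => by
          refine Finset.sum_congr rfl fun i _ => ?_
          rw [Equiv.inv_apply, inv_inv])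
    _ = ∑ k : G, if k = 1 then a else 0 :=
        Finset.sum_congr rfl fun k _ => aux_L4 hE1 hEidem hmul hid hGal k a
    _ = a := by rw [Finset.sum_ite_eq' Finset.univ 1 (fun _ => a),
          if_pos (Finset.mem_univ 1)]

theorem aux_psi_add {E : G → S} {α : G → S → S}
    (hEidem : ∀ g : G, E g * E g = E g)
    (hadd : ∀ (g : G) (x y : S), x * E g⁻¹ = x → y * E g⁻¹ = y →
      α g (x + y) = α g x + α g y)
    (n : ℕ) (x y : ℕ → S) (u v : G → S) :
    psiFun (R := R) E α n x y (u + v)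
      = psiFun (R := R) E α n x y u + psiFun (R := R) E α n x y v := by
  simp only [psiFun]
  rw [← Finset.sum_add_distrib]
  refine Finset.sum_congr rfl fun h _ => ?_
  rw [← Finset.sum_add_distrib]
  refine Finset.sum_congr rfl fun i _ => ?_
  rw [← TensorProduct.tmul_add]
  congr 1
  rw [show y i * (u + v) h * E h = (y i * u h * E h) + (y i * v h * E h) from by
    simp only [Pi.add_apply]; ring]
  exact hadd h⁻¹ _ _ (by rw [inv_inv]; linear_combination (y i * u h) * hEidem h)
    (by rw [inv_inv]; linear_combination (y i * v h) * hEidem h)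

theorem aux_psiphi_id {E : G → S} {α : G → S → S}
    (hE1 : E 1 = 1) (hEidem : ∀ g : G, E g * E g = E g)
    (hbij : ∀ g : G, Set.BijOn (α g) {x : S | x * E g⁻¹ = x} {x : S | x * E g = x})
    (hadd : ∀ (g : G) (x y : S), x * E g⁻¹ = x → y * E g⁻¹ = y →
      α g (x + y) = α g x + α g y)
    (hmul : ∀ (g : G) (x y : S), x * E g⁻¹ = x → y * E g⁻¹ = y →
      α g (x * y) = α g x * α g y)
    (hid : ∀ x : S, α 1 x = x)
    (hcomp2 : ∀ (g k : G) (x : S),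
      α g (α k (x * E k⁻¹) * E g⁻¹) = α (g * k) (x * E (g * k)⁻¹) * E g)
    (hRrange : Set.range (algebraMap R S) = {s : S | ∀ g : G, α g (s * E g⁻¹) = s * E g})
    {n : ℕ} {x y : ℕ → S}
    (hGal : ∀ g : G,
      (g = 1 → ∑ i ∈ Finset.range n, x i * α g (y i * E g⁻¹) = 1) ∧
      (g ≠ 1 → ∑ i ∈ Finset.range n, x i * α g (y i * E g⁻¹) = 0))
    (φ : S ⊗[R] S →ₐ[R] (G → S))
    (hφ : ∀ a b : S, φ (a ⊗ₜ[R] b) = fun g : G => a * α g (b * E g⁻¹))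
    (z : S ⊗[R] S) : psiFun (R := R) E α n x y (φ z) = z := by
  induction z using TensorProduct.induction_on with
  | zero =>
    rw [map_zero, psiFun]
    simp only [Pi.zero_apply, mul_zero, zero_mul, aux_zero hadd,
      TensorProduct.tmul_zero, Finset.sum_const_zero]
  | tmul a b =>
    rw [hφ]
    exact aux_psi_phi hE1 hEidem hbij hadd hmul hid hcomp2 hRrange hGal a b
  | add u v hu hv =>
    rw [map_add, aux_psi_add hEidem hadd n x y, hu, hv]

end Aux

/-- Proposition 6.1(ii): the map φ : S ⊗_R S → Ŝ, x ⊗ y ↦ (x·α_g(y·1_{g⁻¹}))_{g∈G},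
is an R-algebra isomorphism onto Ŝ which is a partial (G×G)-isomorphism between the
tensor-product partial action and the partial action γ on Ŝ. -/
theorem stmt_18 {G : Type*} [CommGroup G] [Fintype G]
    {S R : Type*} [CommRing S] [CommRing R] [Algebra R S]
    (E : G → S) (α : G → S → S)
    -- (E, α) is a unital partial action of G on S
    (hE1 : E 1 = 1) (hEidem : ∀ g : G, E g * E g = E g)
    (hbij : ∀ g : G, Set.BijOn (α g) {x : S | x * E g⁻¹ = x} {x : S | x * E g = x})
    (hadd : ∀ (g : G) (x y : S), x * E g⁻¹ = x → y * E g⁻¹ = y →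
      α g (x + y) = α g x + α g y)
    (hmul : ∀ (g : G) (x y : S), x * E g⁻¹ = x → y * E g⁻¹ = y →
      α g (x * y) = α g x * α g y)
    (hid : ∀ x : S, α 1 x = x)
    (hcomp1 : ∀ g k : G, α g (E g⁻¹ * E k) = E g * E (g * k))
    (hcomp2 : ∀ (g k : G) (x : S),
      α g (α k (x * E k⁻¹) * E g⁻¹) = α (g * k) (x * E (g * k)⁻¹) * E g)
    -- R is (isomorphic to) the invariant subring S^α
    (hRinj : Function.Injective (algebraMap R S))
    (hRrange : Set.range (algebraMap R S) = {s : S | ∀ g : G, α g (s * E g⁻¹) = s * E g})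
    -- S is a partial α-Galois extension of R
    (n : ℕ) (x y : ℕ → S)
    (hGal : ∀ g : G,
      (g = 1 → ∑ i ∈ Finset.range n, x i * α g (y i * E g⁻¹) = 1) ∧
      (g ≠ 1 → ∑ i ∈ Finset.range n, x i * α g (y i * E g⁻¹) = 0))
    -- the map φ
    (φ : S ⊗[R] S →ₐ[R] (G → S))
    (hφ : ∀ a b : S, φ (a ⊗ₜ[R] b) = fun g : G => a * α g (b * E g⁻¹)) :
    -- φ is an isomorphism of R-algebras onto Ŝ
    Function.Injective φ ∧
    Set.range φ = {a : G → S | ∀ g : G, a g * E g = a g} ∧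
    -- φ((S·1_h) ⊗ (S·1_{l⁻¹})) = Ŝ·1̂_{(h,l)}
    (∀ h l : G,
      φ '' (Submodule.span R {u : S ⊗[R] S | ∃ a b : S, u = (a * E h) ⊗ₜ[R] (b * E l⁻¹)} : Set (S ⊗[R] S)) =
        {a : G → S | (∀ g : G, a g * E g = a g) ∧
          ∀ g : G, a g * (E g * E h * E (l⁻¹ * g)) = a g}) ∧
    -- φ intertwines the tensor-product partial action with γ
    (∀ (a b : S) (h l : G),
      φ (α h (a * E h⁻¹) ⊗ₜ[R] α l⁻¹ (b * E l)) =
        fun g : G => α h ((φ ((a * E h⁻¹) ⊗ₜ[R] (b * E l))) ((h * l)⁻¹ * g) * E h⁻¹)) := by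
  classical
  have hpid : ∀ z : S ⊗[R] S, psiFun (R := R) E α n x y (φ z) = z :=
    aux_psiphi_id hE1 hEidem hbij hadd hmul hid hcomp2 hRrange hGal φ hφ
  -- membership of every image in Ŝ
  have hrange1 : ∀ (z : S ⊗[R] S) (g : G), φ z g * E g = φ z g := by
    intro z
    induction z using TensorProduct.induction_on with
    | zero => intro g; rw [map_zero]; simp
    | tmul a b =>
      intro g
      rw [hφ]
      simp only []
      have := aux_mem hbij g (b * E g⁻¹) (by linear_combination b * hEidem g⁻¹)
      linear_combination a * this
    | add u v hu hv =>
      intro g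
      rw [map_add]
      simp only [Pi.add_apply, add_mul, hu g, hv g]
  refine ⟨?_, ?_, ?_, ?_⟩
  · -- injectivity
    intro z₁ z₂ hz
    calc z₁ = psiFun (R := R) E α n x y (φ z₁) := (hpid z₁).symm
      _ = psiFun (R := R) E α n x y (φ z₂) := by rw [hz]
      _ = z₂ := hpid z₂
  · -- range
    ext a
    constructor
    · rintro ⟨z, rfl⟩
      exact fun g => hrange1 z g
    · intro ha
      exact ⟨psiFun (R := R) E α n x y a,
        aux_phi_psi hE1 hEidem hmul hid hcomp2 hGal φ hφ a ha⟩
  · -- span conjunct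
    intro h l
    ext a
    simp only [Set.mem_image, SetLike.mem_coe, Set.mem_setOf_eq]
    constructor
    · rintro ⟨z, hz, rfl⟩
      refine ⟨fun g => hrange1 z g, ?_⟩
      induction hz using Submodule.span_induction with
      | mem w hw =>
        obtain ⟨a', b', rfl⟩ := hw
        intro g
        rw [hφ]
        simp only []
        have hsplit : b' * E l⁻¹ * E g⁻¹ = (b' * E g⁻¹) * (E g⁻¹ * E l⁻¹) := by
          linear_combination (-(b' * E l⁻¹)) * hEidem g⁻¹
        rw [hsplit, hmul g _ _ (by linear_combination b' * hEidem g⁻¹)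
          (by linear_combination (E l⁻¹) * hEidem g⁻¹), hcomp1 g l⁻¹,
          show g * l⁻¹ = l⁻¹ * g from mul_comm g l⁻¹]
        linear_combination (a' * α g (b' * E g⁻¹) * (E g * E g * E (l⁻¹ * g) * E (l⁻¹ * g))) * hEidem h
          + (a' * α g (b' * E g⁻¹) * (E (l⁻¹ * g) * E (l⁻¹ * g) * E h)) * hEidem g
          + (a' * α g (b' * E g⁻¹) * (E h * E g)) * hEidem (l⁻¹ * g)
      | zero => intro g; rw [map_zero]; simp
      | add u v hu hv ihu ihv =>
        intro g
        rw [map_add]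
        simp only [Pi.add_apply, add_mul, ihu g, ihv g]
      | smul r w hw ih =>
        intro g
        rw [map_smul]
        simp only [Pi.smul_apply, Algebra.smul_def]
        rw [mul_assoc, ih g]
    · rintro ⟨ha1, ha2⟩
      refine ⟨psiFun (R := R) E α n x y a * (E h ⊗ₜ[R] E l⁻¹), ?_, ?_⟩
      · -- membership in the span
        have key : ∀ w : S ⊗[R] S, w * (E h ⊗ₜ[R] E l⁻¹) ∈
            Submodule.span R {u : S ⊗[R] S | ∃ a b : S, u = (a * E h) ⊗ₜ[R] (b * E l⁻¹)} := by
          intro w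
          induction w using TensorProduct.induction_on with
          | zero => rw [zero_mul]; exact Submodule.zero_mem _
          | tmul a' b' =>
            rw [Algebra.TensorProduct.tmul_mul_tmul]
            exact Submodule.subset_span ⟨a', b', rfl⟩
          | add u v hu hv =>
            rw [add_mul]
            exact Submodule.add_mem _ hu hv
        exact key _
      · -- maps to a
        rw [map_mul, aux_phi_psi hE1 hEidem hmul hid hcomp2 hGal φ hφ a ha1, hφ]
        funext g
        simp only [Pi.mul_apply]
        rw [show E l⁻¹ * E g⁻¹ = E g⁻¹ * E l⁻¹ from mul_comm _ _, hcomp1 g l⁻¹,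
          show g * l⁻¹ = l⁻¹ * g from mul_comm g l⁻¹]
        linear_combination ha2 g
  · -- intertwining
    intro a b h l
    rw [hφ, hφ]
    funext g
    simp only []
    set A := α h (a * E h⁻¹) with hAdef
    have hA : A * E h = A := aux_mem hbij h _ (by linear_combination a * hEidem h⁻¹)
    have e1 : α g (α l⁻¹ (b * E l) * E g⁻¹) = α (g * l⁻¹) (b * E (g * l⁻¹)⁻¹) * E g := by
      have := hcomp2 g l⁻¹ b
      rwa [inv_inv] at this
    rw [e1]
    set B := α (g * l⁻¹) (b * E (g * l⁻¹)⁻¹) with hBdef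
    have hB : B * E (g * l⁻¹) = B :=
      aux_mem hbij (g * l⁻¹) _ (by linear_combination b * hEidem (g * l⁻¹)⁻¹)
    -- now work on the right-hand side
    set k := (h * l)⁻¹ * g with hkdef
    have split : a * E h⁻¹ * α k (b * E l * E k⁻¹) * E h⁻¹
        = (a * E h⁻¹) * (α k (b * E l * E k⁻¹) * E h⁻¹) := by ring
    rw [split, hmul h _ _ (by linear_combination a * hEidem h⁻¹)
      (by linear_combination (α k (b * E l * E k⁻¹)) * hEidem h⁻¹),
      hcomp2 h k (b * E l),
      show h * k = g * l⁻¹ from by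
        rw [hkdef, mul_inv_rev, ← mul_assoc, ← mul_assoc, mul_comm h l⁻¹,
          mul_assoc l⁻¹ h h⁻¹, mul_inv_cancel, mul_one, mul_comm],
      show b * E l * E (g * l⁻¹)⁻¹ = (b * E (g * l⁻¹)⁻¹) * (E (g * l⁻¹)⁻¹ * E l) from by
        linear_combination (-(b * E l)) * hEidem (g * l⁻¹)⁻¹,
      hmul (g * l⁻¹) _ _ (by linear_combination b * hEidem (g * l⁻¹)⁻¹)
        (by linear_combination (E l) * hEidem (g * l⁻¹)⁻¹),
      hcomp1 (g * l⁻¹) l,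
      show g * l⁻¹ * l = g from by group]
    rw [← hBdef, ← hAdef]
    linear_combination (-(B * E g)) * hA - (A * E g * E h) * hB
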